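/- Let F be a field of characteristic p > 0 and let δ : F → F be a derivation. Then for every t ∈ F and every i with 1 ≤ i ≤ p−2, the sum ∑_{l=0}^{p-2} δ^i(t^{p-1-l}) · t^l equals 0, where δ^i denotes the i-th iterate of δ. -/

import Mathlib

open Polynomial Finset

set_option linter.unusedSectionVars false

section Aux
variable {F : Type*} [Field F] (δ : F → F)

/-- Coefficient-wise application of δ to a polynomial. -/
noncomputable def Dmap (f : Polynomial F) : Polynomial F :=
  f.sum fun n a => Polynomial.C (δ a) * Polynomial.X ^ n

lemma Dmap_coeff (h0 : δ 0 = 0) (f : Polynomial F) (n : ℕ) :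
    (Dmap δ f).coeff n = δ (f.coeff n) := by
  rw [Dmap, Polynomial.sum_def, finset_sum_coeff]
  simp only [coeff_C_mul, coeff_X_pow, mul_ite, mul_one, mul_zero]
  have : ∀ k ∈ f.support, (if n = k then δ (f.coeff k) else 0)
      = if n = k then δ (f.coeff n) else 0 := by
    intro k _; split <;> simp_all
  rw [Finset.sum_congr rfl this, Finset.sum_ite_eq]
  split
  · rfl
  · rw [Polynomial.notMem_support_iff.mp (by assumption), h0]

variable (hadd : ∀ a b : F, δ (a + b) = δ a + δ b)
variable (hmul : ∀ a b : F, δ (a * b) = δ a * b + a * δ b)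

include hadd

lemma delta_zero : δ 0 = 0 := by
  have h := hadd 0 0
  rw [add_zero] at h
  exact left_eq_add.mp h

lemma Dmap_mul (hmul : ∀ a b : F, δ (a * b) = δ a * b + a * δ b)
    (f g : Polynomial F) :
    Dmap δ (f * g) = Dmap δ f * g + f * Dmap δ g := by
  have h0 := delta_zero δ hadd
  let δ' : F →+ F := AddMonoidHom.mk' δ hadd
  ext n
  rw [coeff_add, Dmap_coeff δ h0, coeff_mul, coeff_mul, coeff_mul]
  rw [show δ (∑ x ∈ Finset.HasAntidiagonal.antidiagonal n, f.coeff x.1 * g.coeff x.2)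
      = δ' (∑ x ∈ Finset.HasAntidiagonal.antidiagonal n, f.coeff x.1 * g.coeff x.2) from rfl,
    map_sum]
  rw [← Finset.sum_add_distrib]
  apply Finset.sum_congr rfl
  intro x _
  show δ (f.coeff x.1 * g.coeff x.2) = _
  rw [hmul, Dmap_coeff δ h0, Dmap_coeff δ h0]

lemma Dmap_sum {ι : Type*} (s : Finset ι) (f : ι → Polynomial F) :
    Dmap δ (∑ l ∈ s, f l) = ∑ l ∈ s, Dmap δ (f l) := by
  have h0 := delta_zero δ hadd
  let δ' : F →+ F := AddMonoidHom.mk' δ hadd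
  ext n
  rw [Dmap_coeff δ h0, finset_sum_coeff, finset_sum_coeff]
  rw [show δ (∑ l ∈ s, (f l).coeff n) = δ' (∑ l ∈ s, (f l).coeff n) from rfl, map_sum]
  exact Finset.sum_congr rfl fun l _ => (Dmap_coeff δ h0 (f l) n).symm

lemma Dmap_CX (a : F) (m : ℕ) :
    Dmap δ (C a * X ^ m) = C (δ a) * X ^ m := by
  have h0 := delta_zero δ hadd
  ext n
  rw [Dmap_coeff δ h0, coeff_C_mul, coeff_C_mul, coeff_X_pow]
  split <;> simp [h0]

include hmul

lemma delta_one : δ 1 = 0 := by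
  have h := hmul 1 1
  rw [mul_one, mul_one, one_mul] at h
  exact left_eq_add.mp h

lemma iter_zero : ∀ i, δ^[i] 0 = 0 := by
  intro i
  induction i with
  | zero => rfl
  | succ n ih => rw [Function.iterate_succ_apply', ih, delta_zero δ hadd]

lemma iter_one (i : ℕ) (hi : 1 ≤ i) : δ^[i] 1 = 0 := by
  obtain ⟨j, rfl⟩ := Nat.exists_eq_add_of_le hi
  rw [add_comm, Function.iterate_add_apply, Function.iterate_one,
    delta_one δ hadd hmul, iter_zero δ hadd hmul]

lemma Dmap_u (t : F) : Dmap δ (C t - X) = C (δ t) := by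
  have h0 := delta_zero δ hadd
  have h1 := delta_one δ hadd hmul
  have hn1 : δ (-1 : F) = 0 := by
    have := map_neg (AddMonoidHom.mk' δ hadd) 1
    simpa [h1] using this
  ext n
  rw [Dmap_coeff δ h0, coeff_sub]
  rcases n with _ | _ | n <;>
    simp [coeff_C, coeff_X, h0, h1, hn1]

lemma Dmap_u_pow (t : F) : ∀ k : ℕ, ∃ h : Polynomial F,
    Dmap δ ((C t - X) ^ (k + 1)) = (C t - X) ^ k * h := by
  intro k
  induction k with
  | zero => exact ⟨C (δ t), by rw [pow_one, pow_zero, one_mul, Dmap_u δ hadd hmul]⟩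
  | succ k ih =>
      obtain ⟨h, hh⟩ := ih
      refine ⟨C (δ t) + h, ?_⟩
      rw [pow_succ, mul_comm, Dmap_mul δ hadd hmul, Dmap_u δ hadd hmul, hh]
      ring

lemma Dmap_iter_dvd (t : F) : ∀ i : ℕ, ∀ k : ℕ, ∀ g : Polynomial F,
    ∃ h : Polynomial F,
      (Dmap δ)^[i] ((C t - X) ^ (k + i) * g) = (C t - X) ^ k * h := by
  intro i
  induction i with
  | zero => exact fun k g => ⟨g, by simp⟩
  | succ i ih =>
      intro k g
      have step : ∃ g' : Polynomial F,
          Dmap δ ((C t - X) ^ (k + (i + 1)) * g) = (C t - X) ^ (k + i) * g' := by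
        obtain ⟨h, hh⟩ := Dmap_u_pow δ hadd hmul t (k + i)
        refine ⟨h * g + (C t - X) * Dmap δ g, ?_⟩
        rw [show k + (i + 1) = (k + i) + 1 from rfl, Dmap_mul δ hadd hmul, hh]
        ring
      obtain ⟨g', hg'⟩ := step
      obtain ⟨h, hh⟩ := ih k g'
      exact ⟨h, by rw [Function.iterate_succ_apply, hg', hh]⟩

end Aux

/-- For a derivation δ on a field of characteristic p > 0 and 1 ≤ i ≤ p-2,
the sum ∑_{l=0}^{p-2} δ^i(t^{p-1-l})·t^l vanishes. -/
theorem stmt_2 {F : Type*} [Field F] (p : ℕ) [Fact p.Prime] [CharP F p]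
    (δ : F → F)
    (hadd : ∀ a b : F, δ (a + b) = δ a + δ b)
    (hmul : ∀ a b : F, δ (a * b) = δ a * b + a * δ b) :
    ∀ t : F, ∀ i : ℕ, 1 ≤ i → i ≤ p - 2 →
      ∑ l ∈ Finset.range (p - 1), δ^[i] (t ^ (p - 1 - l)) * t ^ l = 0 := by
  intro t i hi1 hi2
  have hp : p.Prime := Fact.out
  have hp2 : 2 ≤ p := hp.two_le
  obtain ⟨q, hq⟩ : ∃ q, p = q + 1 := ⟨p - 1, by omega⟩
  have hq1 : p - 1 = q := by omega
  rw [hq1]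
  set u : Polynomial F := C t - X with hu
  have hPgeom : (∑ l ∈ Finset.range p, C (t ^ (q - l)) * X ^ l) = u ^ q := by
    have hXC : (X - C t : Polynomial F) ≠ 0 := X_sub_C_ne_zero t
    apply mul_right_cancel₀ hXC
    have hgeom := geom_sum₂_mul (X : Polynomial F) (C t) p
    have hfrob : (C t - X : Polynomial F) ^ p = (C t) ^ p - X ^ p := sub_pow_char _ _
    calc (∑ l ∈ Finset.range p, C (t ^ (q - l)) * X ^ l) * (X - C t)
        = (∑ l ∈ Finset.range p, X ^ l * (C t) ^ (p - 1 - l)) * (X - C t) := by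
          congr 1; apply Finset.sum_congr rfl; intro l _
          rw [hq1, ← C_pow]; ring
      _ = X ^ p - (C t) ^ p := hgeom
      _ = -(u ^ p) := by rw [hfrob]; ring
      _ = u ^ q * (X - C t) := by
          have hup : u ^ p = u ^ q * u := by rw [← pow_succ, ← hq]
          rw [hup, hu]; ring
  have hDi : ∀ j : ℕ, (Dmap δ)^[j] (∑ l ∈ Finset.range p, C (t ^ (q - l)) * X ^ l)
      = ∑ l ∈ Finset.range p, C (δ^[j] (t ^ (q - l))) * X ^ l := by
    intro j
    induction j with
    | zero => simp
    | succ j ih =>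
        rw [Function.iterate_succ_apply', ih, Dmap_sum δ hadd]
        exact Finset.sum_congr rfl fun l _ => by
          rw [Dmap_CX δ hadd, Function.iterate_succ_apply']
  obtain ⟨h, hh⟩ := Dmap_iter_dvd δ hadd hmul t i (q - i) 1
  have hexp : (q - i) + i = q := by omega
  rw [hexp, mul_one, ← hu] at hh
  have heval : Polynomial.eval t ((Dmap δ)^[i] (u ^ q)) = 0 := by
    rw [hh]
    have hki : (q - i) ≠ 0 := by omega
    simp [hu, hki]
  rw [← hPgeom, hDi i] at heval
  have heval2 : Polynomial.eval t (∑ l ∈ Finset.range p, C (δ^[i] (t ^ (q - l))) * X ^ l)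
      = ∑ l ∈ Finset.range p, δ^[i] (t ^ (q - l)) * t ^ l := by
    rw [Polynomial.eval_finset_sum]; simp
  rw [heval2] at heval
  rw [hq, Finset.sum_range_succ, Nat.sub_self, pow_zero,
    iter_one δ hadd hmul i hi1, zero_mul, add_zero] at heval
  exact heval
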